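/- Let Q₀, Q₁, Q₂, Q₃ be the four half-open dyadic subsquares of [0,1)² and let L be the map on functions defined by (Lv)(x) := ū(x) + (1/4)Σ_{i=0}^{3} v(A_i(x))·1_{Q_i}(x) for x ∈ [0,1)², where ū := Σ_{i=0}^{3}(i/4)·1_{Q_i}. Then for every p ∈ [1, ∞] and all Lebesgue-measurable v, w : ℝ² → ℝ, the L^p norm with respect to Lebesgue measure restricted to [0,1)² satisfies ‖Lv − Lw‖_{L^p([0,1)²)} = (1/4)·‖v − w‖_{L^p([0,1)²)}. In particular, L is a contraction on L^p([0,1)²) with contraction factor 1/4. -/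

import Mathlib

open MeasureTheory Set Filter
open scoped ENNReal NNReal

noncomputable section

/-- The half-open unit square `[0,1)²` in `ℝ²`. -/
def unitSq : Set (ℝ × ℝ) := Set.Ico (0:ℝ) 1 ×ˢ Set.Ico (0:ℝ) 1

/-- The four contractions `B₀, B₁, B₂, B₃` mapping `[0,1)²` onto its four half-open
dyadic subsquares (lower-left, lower-right, upper-left, upper-right). -/
def Bmap (i : Fin 4) (x : ℝ × ℝ) : ℝ × ℝ :=
  (x.1 / 2 + (if i.val % 2 = 1 then (1:ℝ)/2 else 0),
   x.2 / 2 + (if 2 ≤ i.val then (1:ℝ)/2 else 0))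

/-- The inverse maps `A₀, A₁, A₂, A₃` of `B₀, …, B₃`. -/
def Amap (i : Fin 4) (x : ℝ × ℝ) : ℝ × ℝ :=
  (2 * x.1 - (if i.val % 2 = 1 then (1:ℝ) else 0),
   2 * x.2 - (if 2 ≤ i.val then (1:ℝ) else 0))

/-- The four half-open dyadic subsquares `Q₀, Q₁, Q₂, Q₃` of `[0,1)²`. -/
def Qsub (i : Fin 4) : Set (ℝ × ℝ) := Bmap i '' unitSq

/-- The step function `ū = Σ_{i=0}^{3} (i/4)·1_{Q_i}`. -/
def ubar (x : ℝ × ℝ) : ℝ :=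
  ∑ i : Fin 4, ((i.val : ℝ) / 4) * (Qsub i).indicator (fun _ => (1:ℝ)) x

/-- The operator `L`: `(Lv)(x) = ū(x) + (1/4) Σ_i v(A_i x)·1_{Q_i}(x)` on `[0,1)²`,
extended by `0` outside. -/
def Lop (v : ℝ × ℝ → ℝ) : ℝ × ℝ → ℝ :=
  unitSq.indicator fun x =>
    ubar x + (1/4) * ∑ i : Fin 4, (Qsub i).indicator (fun y => v (Amap i y)) x

/-- The `j`-th binary digit `a_j(s) = ⌊2^j s⌋ − 2⌊2^{j−1} s⌋` of `s ∈ [0,1)` (`j ≥ 1`). -/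
def bdigit (j : ℕ) (s : ℝ) : ℤ := ⌊(2:ℝ)^j * s⌋ - 2 * ⌊(2:ℝ)^(j-1) * s⌋

/-- The `j`-th quadrant digit `i_j(x) = a_j(x₁) + 2 a_j(x₂) ∈ {0,1,2,3}` of `x ∈ [0,1)²`. -/
def qdigit (j : ℕ) (x : ℝ × ℝ) : ℤ := bdigit j x.1 + 2 * bdigit j x.2

/-- The Flat Mountain function `u(x) = Σ_{j≥1} i_j(x)·4^{−j}` on `[0,1)²`, `0` outside. -/
def uFM : ℝ × ℝ → ℝ :=
  unitSq.indicator fun x => ∑' j : ℕ, (qdigit (j+1) x : ℝ) / 4^(j+1)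

/-- The iterates `u₀ = 0`, `u_{n+1} = L u_n`. -/
def uIter : ℕ → ℝ × ℝ → ℝ
  | 0 => fun _ => 0
  | (n+1) => Lop (uIter n)

/-- The dyadic square `Q_{i₁,…,i_n} = B_{i₁} ∘ ⋯ ∘ B_{i_n} ([0,1)²)` indexed by a finite
sequence of quadrant digits. -/
def Qseq : List (Fin 4) → Set (ℝ × ℝ)
  | [] => unitSq
  | (i :: l) => Bmap i '' Qseq l

/-- The `j`-th base-4 digit `t_j = ⌊4^j t⌋ − 4⌊4^{j−1} t⌋` of `t ∈ [0,1)` (`j ≥ 1`). -/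
def tdigit (j : ℕ) (t : ℝ) : ℤ := ⌊(4:ℝ)^j * t⌋ - 4 * ⌊(4:ℝ)^(j-1) * t⌋

/-- The Lebesgue (Z-order) space-filling curve `γ`. -/
def lcurve (t : ℝ) : ℝ × ℝ :=
  (∑' j : ℕ, ((tdigit (j+1) t % 2 : ℤ) : ℝ) / 2^(j+1),
   ∑' j : ℕ, ((tdigit (j+1) t / 2 : ℤ) : ℝ) / 2^(j+1))

end


noncomputable section AuxFM

open MeasureTheory Set
open scoped ENNReal

/-- doubling map -/
def Tmap : ℝ × ℝ → ℝ × ℝ := fun x => (Int.fract (2 * x.1), Int.fract (2 * x.2))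

def o1 (i : Fin 4) : ℝ := if i.val % 2 = 1 then (1:ℝ)/2 else 0
def o2 (i : Fin 4) : ℝ := if 2 ≤ i.val then (1:ℝ)/2 else 0

lemma Bmap_eq (i : Fin 4) (x : ℝ × ℝ) : Bmap i x = (x.1 / 2 + o1 i, x.2 / 2 + o2 i) := rfl

lemma Amap_eq (i : Fin 4) (x : ℝ × ℝ) :
    Amap i x = (2 * x.1 - 2 * o1 i, 2 * x.2 - 2 * o2 i) := by
  unfold Amap o1 o2
  split_ifs <;> norm_num

lemma mem_Qsub_iff (i : Fin 4) (x : ℝ × ℝ) :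
    x ∈ Qsub i ↔ (o1 i ≤ x.1 ∧ x.1 < o1 i + 1/2) ∧ (o2 i ≤ x.2 ∧ x.2 < o2 i + 1/2) := by
  constructor
  · rintro ⟨y, hy, rfl⟩
    obtain ⟨⟨h1, h2⟩, h3, h4⟩ := hy
    rw [Bmap_eq]
    refine ⟨⟨by simpa using by linarith, by simpa using by linarith⟩,
            ⟨by simpa using by linarith, by simpa using by linarith⟩⟩
  · rintro ⟨⟨h1, h2⟩, h3, h4⟩
    refine ⟨(2 * x.1 - 2 * o1 i, 2 * x.2 - 2 * o2 i),
      (by refine ⟨⟨?_, ?_⟩, ?_, ?_⟩ <;> dsimp only <;> linarith), ?_⟩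
    rw [Bmap_eq]
    exact Prod.ext (by simp; ring) (by simp; ring)

lemma o1_cases (i : Fin 4) : o1 i = 0 ∨ o1 i = 1/2 := by
  unfold o1; split_ifs
  · right; rfl
  · left; rfl

lemma o2_cases (i : Fin 4) : o2 i = 0 ∨ o2 i = 1/2 := by
  unfold o2; split_ifs
  · right; rfl
  · left; rfl

lemma fract_lo {t : ℝ} (h0 : 0 ≤ t) (h1 : t < 1/2) : Int.fract (2*t) = 2*t :=
  Int.fract_eq_self.2 ⟨by linarith, by linarith⟩

lemma fract_hi {t : ℝ} (h0 : 1/2 ≤ t) (h1 : t < 1) : Int.fract (2*t) = 2*t - 1 := by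
  calc Int.fract (2*t) = Int.fract (2*t - ((1:ℤ):ℝ)) := (Int.fract_sub_intCast _ _).symm
  _ = 2*t - 1 := by
      push_cast
      exact Int.fract_eq_self.2 ⟨by linarith, by linarith⟩

lemma Tmap_eq_on (i : Fin 4) (x : ℝ × ℝ) (hx : x ∈ Qsub i) : Tmap x = Amap i x := by
  rw [mem_Qsub_iff] at hx
  obtain ⟨⟨h1, h2⟩, h3, h4⟩ := hx
  rw [Amap_eq]
  refine Prod.ext ?_ ?_
  · show Int.fract (2 * x.1) = _
    rcases o1_cases i with h | h <;> rw [h] at h1 h2 ⊢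
    · rw [fract_lo (by linarith) (by linarith)]; ring
    · rw [fract_hi (by linarith) (by linarith)]; ring
  · show Int.fract (2 * x.2) = _
    rcases o2_cases i with h | h <;> rw [h] at h3 h4 ⊢
    · rw [fract_lo (by linarith) (by linarith)]; ring
    · rw [fract_hi (by linarith) (by linarith)]; ring

lemma o1_0 : o1 0 = 0 := rfl
lemma o1_1 : o1 1 = 1/2 := rfl
lemma o1_2 : o1 2 = 0 := rfl
lemma o1_3 : o1 3 = 1/2 := rfl
lemma o2_0 : o2 0 = 0 := rfl
lemma o2_1 : o2 1 = 0 := rfl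
lemma o2_2 : o2 2 = 1/2 := rfl
lemma o2_3 : o2 3 = 1/2 := rfl

lemma sum_indicator_eq (v : ℝ × ℝ → ℝ) (x : ℝ × ℝ) (hx : x ∈ unitSq) :
    ∑ i : Fin 4, (Qsub i).indicator (fun y => v (Amap i y)) x = v (Tmap x) := by
  obtain ⟨⟨h1, h2⟩, h3, h4⟩ := hx
  rw [Fin.sum_univ_four]
  rcases lt_or_ge x.1 (1/2) with ha | ha <;> rcases lt_or_ge x.2 (1/2) with hb | hb
  · have m0 : x ∈ Qsub 0 := (mem_Qsub_iff 0 x).2 (by rw [o1_0, o2_0]; exact ⟨⟨h1, by linarith⟩, h3, by linarith⟩)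
    have m1 : x ∉ Qsub 1 := fun h => by have := ((mem_Qsub_iff 1 x).1 h).1.1; rw [o1_1] at this; linarith
    have m2 : x ∉ Qsub 2 := fun h => by have := ((mem_Qsub_iff 2 x).1 h).2.1; rw [o2_2] at this; linarith
    have m3 : x ∉ Qsub 3 := fun h => by have := ((mem_Qsub_iff 3 x).1 h).2.1; rw [o2_3] at this; linarith
    rw [Set.indicator_of_mem m0, Set.indicator_of_notMem m1, Set.indicator_of_notMem m2,
      Set.indicator_of_notMem m3, ← Tmap_eq_on 0 x m0]
    ring
  · have m0 : x ∈ Qsub 2 := (mem_Qsub_iff 2 x).2 (by rw [o1_2, o2_2]; exact ⟨⟨h1, by linarith⟩, hb, by linarith⟩)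
    have m1 : x ∉ Qsub 1 := fun h => by have := ((mem_Qsub_iff 1 x).1 h).1.1; rw [o1_1] at this; linarith
    have m2 : x ∉ Qsub 0 := fun h => by have := ((mem_Qsub_iff 0 x).1 h).2.2; rw [o2_0] at this; linarith
    have m3 : x ∉ Qsub 3 := fun h => by have := ((mem_Qsub_iff 3 x).1 h).1.1; rw [o1_3] at this; linarith
    rw [Set.indicator_of_mem m0, Set.indicator_of_notMem m1, Set.indicator_of_notMem m2,
      Set.indicator_of_notMem m3, ← Tmap_eq_on 2 x m0]
    ring
  · have m0 : x ∈ Qsub 1 := (mem_Qsub_iff 1 x).2 (by rw [o1_1, o2_1]; exact ⟨⟨ha, by linarith⟩, h3, by linarith⟩)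
    have m1 : x ∉ Qsub 0 := fun h => by have := ((mem_Qsub_iff 0 x).1 h).1.2; rw [o1_0] at this; linarith
    have m2 : x ∉ Qsub 2 := fun h => by have := ((mem_Qsub_iff 2 x).1 h).1.2; rw [o1_2] at this; linarith
    have m3 : x ∉ Qsub 3 := fun h => by have := ((mem_Qsub_iff 3 x).1 h).2.1; rw [o2_3] at this; linarith
    rw [Set.indicator_of_notMem m1, Set.indicator_of_mem m0, Set.indicator_of_notMem m2,
      Set.indicator_of_notMem m3, ← Tmap_eq_on 1 x m0]
    ring
  · have m0 : x ∈ Qsub 3 := (mem_Qsub_iff 3 x).2 (by rw [o1_3, o2_3]; exact ⟨⟨ha, by linarith⟩, hb, by linarith⟩)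
    have m1 : x ∉ Qsub 0 := fun h => by have := ((mem_Qsub_iff 0 x).1 h).1.2; rw [o1_0] at this; linarith
    have m2 : x ∉ Qsub 1 := fun h => by have := ((mem_Qsub_iff 1 x).1 h).2.2; rw [o2_1] at this; linarith
    have m3 : x ∉ Qsub 2 := fun h => by have := ((mem_Qsub_iff 2 x).1 h).1.2; rw [o1_2] at this; linarith
    rw [Set.indicator_of_notMem m1, Set.indicator_of_notMem m3, Set.indicator_of_notMem m2,
      Set.indicator_of_mem m0, ← Tmap_eq_on 3 x m0]
    ring

lemma Lop_sub (v w : ℝ × ℝ → ℝ) (x : ℝ × ℝ) :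
    Lop v x - Lop w x
      = unitSq.indicator (fun y => (1/4 : ℝ) * (v (Tmap y) - w (Tmap y))) x := by
  by_cases hx : x ∈ unitSq
  · rw [Lop, Lop, Set.indicator_of_mem hx, Set.indicator_of_mem hx, Set.indicator_of_mem hx,
      sum_indicator_eq v x hx, sum_indicator_eq w x hx]
    ring
  · rw [Lop, Lop, Set.indicator_of_notMem hx, Set.indicator_of_notMem hx,
      Set.indicator_of_notMem hx]
    ring

lemma measurableSet_unitSq : MeasurableSet unitSq :=
  measurableSet_Ico.prod measurableSet_Ico

lemma measurableSet_Qsub (i : Fin 4) : MeasurableSet (Qsub i) := by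
  have : Qsub i = Set.Ico (o1 i) (o1 i + 1/2) ×ˢ Set.Ico (o2 i) (o2 i + 1/2) := by
    ext x; rw [mem_Qsub_iff]; rfl
  rw [this]
  exact measurableSet_Ico.prod measurableSet_Ico

lemma measurable_Amap (i : Fin 4) : Measurable (Amap i) := by
  unfold Amap
  exact ((measurable_const.mul measurable_fst).sub measurable_const).prod
    ((measurable_const.mul measurable_snd).sub measurable_const)

lemma measurable_Tmap : Measurable Tmap :=
  (measurable_fract.comp (measurable_const.mul measurable_fst)).prod
    (measurable_fract.comp (measurable_const.mul measurable_snd))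

lemma preimage_Amap (i : Fin 4) : Amap i ⁻¹' unitSq = Qsub i := by
  ext x
  rw [Set.mem_preimage, mem_Qsub_iff]
  have : Amap i x ∈ unitSq ↔
      (0 ≤ 2 * x.1 - 2 * o1 i ∧ 2 * x.1 - 2 * o1 i < 1)
        ∧ (0 ≤ 2 * x.2 - 2 * o2 i ∧ 2 * x.2 - 2 * o2 i < 1) := by
    simp only [Amap_eq, unitSq, Set.mem_prod, Set.mem_Ico]
  rw [this]
  constructor
  · rintro ⟨⟨h1, h2⟩, h3, h4⟩
    exact ⟨⟨by linarith, by linarith⟩, by linarith, by linarith⟩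
  · rintro ⟨⟨h1, h2⟩, h3, h4⟩
    exact ⟨⟨by linarith, by linarith⟩, by linarith, by linarith⟩

lemma map_smul2 : Measure.map ((2:ℝ) • ·) (volume : Measure (ℝ × ℝ)) = (4:ℝ≥0∞)⁻¹ • volume := by
  rw [Measure.map_addHaar_smul volume (by norm_num : (2:ℝ) ≠ 0)]
  congr 1
  rw [Module.finrank_prod, Module.finrank_self]
  rw [show |((2:ℝ)^(1+1))⁻¹| = ((4:ℝ))⁻¹ by norm_num]
  rw [ENNReal.ofReal_inv_of_pos (by norm_num)]
  norm_num

lemma map_Amap_volume (i : Fin 4) :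
    Measure.map (Amap i) (volume : Measure (ℝ × ℝ)) = (4:ℝ≥0∞)⁻¹ • volume := by
  have hcomp : Amap i = (fun y : ℝ × ℝ => (-(2 * o1 i), -(2 * o2 i)) + y) ∘ (fun x : ℝ × ℝ => (2:ℝ) • x) := by
    funext x
    rw [Function.comp_apply, Amap_eq]
    refine Prod.ext ?_ ?_ <;> simp [Prod.smul_fst, Prod.smul_snd, smul_eq_mul] <;> ring
  rw [hcomp, ← Measure.map_map (measurable_const_add _) (measurable_const_smul _), map_smul2,
    Measure.map_smul, map_add_left_eq_self]

lemma map_Amap_restrict (i : Fin 4) :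
    Measure.map (Amap i) (volume.restrict (Qsub i)) = (4:ℝ≥0∞)⁻¹ • volume.restrict unitSq := by
  have h := Measure.restrict_map (measurable_Amap i) measurableSet_unitSq
    (μ := (volume : Measure (ℝ × ℝ)))
  rw [preimage_Amap] at h
  rw [← h, map_Amap_volume, Measure.restrict_smul]

lemma disjoint_Qsub {i j : Fin 4} (hij : i ≠ j) : Disjoint (Qsub i) (Qsub j) := by
  rw [Set.disjoint_left]
  intro x hxi hxj
  rw [mem_Qsub_iff] at hxi hxj
  obtain ⟨⟨a1, a2⟩, a3, a4⟩ := hxi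
  obtain ⟨⟨b1, b2⟩, b3, b4⟩ := hxj
  fin_cases i <;> fin_cases j <;> simp_all [o1, o2] <;> linarith

lemma unitSq_eq_union :
    unitSq = (Qsub 0 ∪ Qsub 1) ∪ (Qsub 2 ∪ Qsub 3) := by
  ext x
  simp only [Set.mem_union, mem_Qsub_iff, o1_0, o1_1, o1_2, o1_3, o2_0, o2_1, o2_2, o2_3]
  constructor
  · rintro ⟨⟨h1, h2⟩, h3, h4⟩
    rcases lt_or_ge x.1 (1/2) with ha | ha <;> rcases lt_or_ge x.2 (1/2) with hb | hb
    · exact Or.inl (Or.inl ⟨⟨h1, by linarith⟩, h3, by linarith⟩)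
    · exact Or.inr (Or.inl ⟨⟨h1, by linarith⟩, hb, by linarith⟩)
    · exact Or.inl (Or.inr ⟨⟨ha, by linarith⟩, h3, by linarith⟩)
    · exact Or.inr (Or.inr ⟨⟨ha, by linarith⟩, hb, by linarith⟩)
  · rintro ((⟨⟨h1, h2⟩, h3, h4⟩ | ⟨⟨h1, h2⟩, h3, h4⟩) | (⟨⟨h1, h2⟩, h3, h4⟩ | ⟨⟨h1, h2⟩, h3, h4⟩)) <;>
      exact ⟨⟨by linarith, by linarith⟩, by linarith, by linarith⟩

lemma restrict_unitSq_eq_sum :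
    (volume : Measure (ℝ × ℝ)).restrict unitSq
      = volume.restrict (Qsub 0) + volume.restrict (Qsub 1)
        + volume.restrict (Qsub 2) + volume.restrict (Qsub 3) := by
  have d01 : Disjoint (Qsub 0) (Qsub 1) := disjoint_Qsub (by decide)
  have d23 : Disjoint (Qsub 2) (Qsub 3) := disjoint_Qsub (by decide)
  have dbig : Disjoint (Qsub 0 ∪ Qsub 1) (Qsub 2 ∪ Qsub 3) := by
    refine Set.disjoint_union_left.2 ⟨?_, ?_⟩ <;> refine Set.disjoint_union_right.2 ⟨?_, ?_⟩ <;>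
      exact disjoint_Qsub (by decide)
  rw [unitSq_eq_union,
    Measure.restrict_union dbig ((measurableSet_Qsub 2).union (measurableSet_Qsub 3)),
    Measure.restrict_union d01 (measurableSet_Qsub 1),
    Measure.restrict_union d23 (measurableSet_Qsub 3)]
  abel

lemma Tmap_measurePreserving :
    MeasurePreserving Tmap ((volume : Measure (ℝ × ℝ)).restrict unitSq)
      (volume.restrict unitSq) := by
  refine ⟨measurable_Tmap, ?_⟩
  have hmapi : ∀ i : Fin 4,
      Measure.map Tmap (volume.restrict (Qsub i)) = (4:ℝ≥0∞)⁻¹ • volume.restrict unitSq := by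
    intro i
    have hae : Tmap =ᵐ[volume.restrict (Qsub i)] Amap i :=
      ((ae_restrict_iff' (measurableSet_Qsub i)).2
        (Filter.Eventually.of_forall fun x hx => Tmap_eq_on i x hx))
    rw [Measure.map_congr hae, map_Amap_restrict]
  conv_lhs => rw [restrict_unitSq_eq_sum]
  rw [Measure.map_add _ _ measurable_Tmap, Measure.map_add _ _ measurable_Tmap,
    Measure.map_add _ _ measurable_Tmap, hmapi 0, hmapi 1, hmapi 2, hmapi 3,
    ← add_smul, ← add_smul, ← add_smul]
  rw [show (4:ℝ≥0∞)⁻¹ + 4⁻¹ + 4⁻¹ + 4⁻¹ = 1 by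
    rw [← ENNReal.mul_inv_cancel (by norm_num : (4:ℝ≥0∞) ≠ 0) (by norm_num)]; ring]
  rw [one_smul]

end AuxFM

/-- Part (i) of the contraction lemma in the 'Flat Mountain' construction: the map `L`
is a scaled isometry with factor `1/4` on `L^p([0,1)²)` for every `p ∈ [1,∞]`. -/
theorem stmt6 (p : ℝ≥0∞) (hp : 1 ≤ p) (v w : ℝ × ℝ → ℝ)
    (hv : Measurable v) (hw : Measurable w) :
    eLpNorm (fun x => Lop v x - Lop w x) p (volume.restrict unitSq)
      = (1/4 : ℝ≥0∞) * eLpNorm (fun x => v x - w x) p (volume.restrict unitSq) := by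
  have hpt : (fun x => Lop v x - Lop w x)
      = unitSq.indicator (fun y => (1/4 : ℝ) * (v (Tmap y) - w (Tmap y))) :=
    funext (Lop_sub v w)
  rw [hpt, eLpNorm_congr_ae (indicator_ae_eq_restrict measurableSet_unitSq)]
  have hsmul : (fun y => (1/4 : ℝ) * (v (Tmap y) - w (Tmap y)))
      = (1/4 : ℝ) • ((fun y => v y - w y) ∘ Tmap) := rfl
  rw [hsmul, eLpNorm_const_smul,
    eLpNorm_comp_measurePreserving (g := fun y => v y - w y) (hv.sub hw).aestronglyMeasurable
      Tmap_measurePreserving]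
  congr 1
  rw [show ((1:ℝ)/4) = (((1/4 : ℝ≥0)) : ℝ) by norm_num, NNReal.enorm_eq]
  simp
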